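/- Let n ≥ 1, let a_1, …, a_n ≥ 1 be integers with |a| = a_1 + ⋯ + a_n, let k be an integer with k ≤ |a|, and let L(x_1,…,x_n) be a Laurent polynomial in x_1,…,x_n over ℚ(q) (in particular independent of x_0 and of a_0). Then there exists a polynomial P(t) with coefficients in ℚ(q), of degree at most |a| − k − n (the zero polynomial if |a| − k − n < 0), such that for every integer a_0 ≥ 0, CT_x x_0^k · L(x_1,…,x_n) · D_n(x,a,q) = P(q^{a_0}). -/

import Mathlib

open Finset

noncomputable section

abbrev K : Type := RatFunc ℚ

abbrev LP (N : ℕ) : Type := AddMonoidAlgebra K (Fin N →₀ ℤ)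

def q : K := RatFunc.X

def Xp {N : ℕ} (i : Fin N) : LP N := AddMonoidAlgebra.single (Finsupp.single i 1) 1

def Xi {N : ℕ} (i : Fin N) : LP N := AddMonoidAlgebra.single (Finsupp.single i (-1)) 1

def coeff {N : ℕ} (F : LP N) (m : Fin N →₀ ℤ) : K := F.coeff m

def CT {N : ℕ} (F : LP N) : K := coeff F 0

def Cq {N : ℕ} (c : K) : LP N := AddMonoidAlgebra.single 0 c

def poch {N : ℕ} (z : LP N) (k : ℕ) : LP N := ∏ i ∈ Finset.range k, (1 - Cq (q ^ i) * z)

def qpoch (k : ℕ) : K := ∏ i ∈ Finset.range k, (1 - q ^ (i + 1))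

def Dn {N : ℕ} (a : Fin N → ℕ) : LP N :=
  ∏ p ∈ Finset.univ.filter (fun p : Fin N × Fin N => p.1 < p.2),
    (poch (Xp p.1 * Xi p.2) (a p.1) * poch (Cq q * Xp p.2 * Xi p.1) (a p.2 - 1))

def EbarQ {n : ℕ} (Q : Finset (Fin n × Fin n)) (i j : Fin n) : Prop :=
  (i < j ∧ (i, j) ∉ Q) ∨ (j < i ∧ (j, i) ∈ Q)

namespace Stmt6Aux
open Polynomial

lemma q_ne_zero : q ≠ 0 := RatFunc.X_ne_zero

lemma q_pow_sub_one_ne_zero (m : ℕ) : q ^ (m + 1) - 1 ≠ 0 := by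
  rw [sub_ne_zero]
  intro h
  have h2 : (algebraMap (Polynomial ℚ) (RatFunc ℚ)) (Polynomial.X ^ (m+1)) =
      (algebraMap (Polynomial ℚ) (RatFunc ℚ)) 1 := by
    simpa [q, RatFunc.algebraMap_X, map_pow] using h
  have h3 := IsFractionRing.injective (Polynomial ℚ) (RatFunc ℚ) h2
  have := congrArg Polynomial.natDegree h3
  simp [Polynomial.natDegree_X_pow] at this

def s : ℕ → K
  | 0 => 1
  | m + 1 => s m * q ^ m / (q ^ (m + 1) - 1)

def Pm (m : ℕ) : Polynomial K :=
  Polynomial.C (s m) * ∏ i ∈ Finset.range m, (1 - Polynomial.C (q⁻¹ ^ i) * Polynomial.X)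

lemma Pm_eval (m : ℕ) (t : K) :
    (Pm m).eval t = s m * ∏ i ∈ Finset.range m, (1 - q⁻¹ ^ i * t) := by
  simp [Pm, eval_prod]

lemma Pm_zero_eval (t : K) : (Pm 0).eval t = 1 := by simp [Pm_eval, s]

lemma Pm_natDegree_le (m : ℕ) : (Pm m).natDegree ≤ m := by
  refine le_trans (natDegree_C_mul_le _ _) ?_
  refine le_trans (natDegree_prod_le _ _) ?_
  calc ∑ i ∈ Finset.range m, (1 - Polynomial.C ((q : K)⁻¹ ^ i) * Polynomial.X).natDegree
      ≤ ∑ _i ∈ Finset.range m, 1 := by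
        refine Finset.sum_le_sum fun i _ => ?_
        refine le_trans (natDegree_sub_le _ _) ?_
        simp only [natDegree_one, max_le_iff]
        exact ⟨Nat.zero_le 1, le_trans (natDegree_C_mul_le _ _) natDegree_X_le⟩
    _ = m := by simp

lemma s_succ_key (m : ℕ) : s (m + 1) * (q - q⁻¹ ^ m) = s m := by
  have h := q_pow_sub_one_ne_zero m
  have hq := q_ne_zero
  have hqm : q ^ m ≠ 0 := pow_ne_zero _ hq
  rw [show s (m+1) = s m * q ^ m / (q ^ (m + 1) - 1) from rfl]
  rw [inv_pow]
  field_simp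
  ring

lemma Pm_eval_q_pow_eq_zero {m a₀ : ℕ} (h : a₀ < m) : (Pm m).eval (q ^ a₀) = 0 := by
  rw [Pm_eval]
  have : (1 - q⁻¹ ^ a₀ * q ^ a₀ : K) = 0 := by
    rw [inv_pow, inv_mul_cancel₀ (pow_ne_zero _ q_ne_zero)]; ring
  rw [Finset.prod_eq_zero (Finset.mem_range.2 h) this, mul_zero]

lemma Pm_pascal (m : ℕ) (t : K) :
    (Pm (m + 1)).eval (q * t) = (Pm (m + 1)).eval t - t * (Pm m).eval t := by
  rw [Pm_eval, Pm_eval, Pm_eval]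
  have h1 : ∏ i ∈ Finset.range (m + 1), (1 - q⁻¹ ^ i * (q * t)) =
      (∏ i ∈ Finset.range m, (1 - q⁻¹ ^ i * t)) * (1 - q * t) := by
    rw [Finset.prod_range_succ']
    congr 1
    · refine Finset.prod_congr rfl fun i _ => ?_
      have : q⁻¹ ^ (i + 1) * q = q⁻¹ ^ i := by
        rw [pow_succ, mul_assoc, inv_mul_cancel₀ q_ne_zero, mul_one]
      rw [show q⁻¹ ^ (i+1) * (q * t) = (q⁻¹ ^ (i+1) * q) * t by ring, this]
    · simp
  rw [h1, Finset.prod_range_succ]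
  have key := s_succ_key m
  set A := ∏ i ∈ Finset.range m, (1 - q⁻¹ ^ i * t) with hA
  linear_combination (-(t * A)) * key

lemma poch_single_expand {N : ℕ} (e : Fin N →₀ ℤ) (a₀ : ℕ) :
    poch (AddMonoidAlgebra.single e 1) a₀ =
      ∑ m ∈ Finset.range (a₀ + 1),
        AddMonoidAlgebra.single (m • e) ((Pm m).eval (q ^ a₀)) := by
  induction a₀ with
  | zero =>
      rw [poch, Finset.range_zero, Finset.prod_empty, Finset.sum_range_one, zero_smul,
        pow_zero, Pm_zero_eval]
      exact AddMonoidAlgebra.one_def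
  | succ a ih =>
      have hstep : poch (AddMonoidAlgebra.single e 1) (a + 1) =
          poch (AddMonoidAlgebra.single e 1) a *
            (1 - AddMonoidAlgebra.single e (q ^ a : K)) := by
        rw [poch, Finset.prod_range_succ, ← poch]
        congr 2
        rw [Cq, AddMonoidAlgebra.single_mul_single, zero_add, mul_one]
      rw [hstep, ih, mul_sub, mul_one, Finset.sum_mul]
      have hmul : ∀ m : ℕ,
          AddMonoidAlgebra.single (m • e) ((Pm m).eval (q ^ a)) *
            AddMonoidAlgebra.single e (q ^ a : K) =
          AddMonoidAlgebra.single ((m + 1) • e) (q ^ a * (Pm m).eval (q ^ a)) := by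
        intro m
        rw [AddMonoidAlgebra.single_mul_single, succ_nsmul, mul_comm]
      simp only [hmul]
      rw [Finset.sum_range_succ' (fun m => AddMonoidAlgebra.single (m • e)
        ((Pm m).eval (q ^ (a+1)))) (a + 1)]
      have hc0 : ∀ b : ℕ, (Pm 0).eval (q ^ b) = 1 := fun b => Pm_zero_eval _
      have hpas : ∀ m : ℕ, (Pm (m+1)).eval (q ^ (a+1)) =
          (Pm (m+1)).eval (q ^ a) - q ^ a * (Pm m).eval (q ^ a) := by
        intro m
        rw [pow_succ, mul_comm (q ^ a) q, Pm_pascal]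
      simp only [hpas, hc0, zero_smul]
      have hsub : ∀ (u : Fin N →₀ ℤ) (x y : K),
          (AddMonoidAlgebra.single u (x - y) : LP N) =
            AddMonoidAlgebra.single u x - AddMonoidAlgebra.single u y := fun u x y =>
        AddMonoidAlgebra.single_sub u x y
      simp only [hsub]
      rw [Finset.sum_sub_distrib]
      have h2 := Finset.sum_range_succ' (fun m => (AddMonoidAlgebra.single (m • e)
        ((Pm m).eval (q ^ a)) : LP N)) (a + 1)
      rw [Finset.sum_range_succ] at h2
      rw [Pm_eval_q_pow_eq_zero (Nat.lt_succ_self a)] at h2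
      simp only [AddMonoidAlgebra.single_zero, add_zero, zero_smul, hc0] at h2
      have hkey : (∑ x ∈ Finset.range (a+1), (AddMonoidAlgebra.single ((x+1) • e)
          ((Pm (x+1)).eval (q ^ a)) : LP N)) =
          (∑ m ∈ Finset.range (a+1), (AddMonoidAlgebra.single (m • e)
          ((Pm m).eval (q ^ a)) : LP N)) - AddMonoidAlgebra.single 0 1 := by
        rw [h2]; abel
      rw [hkey]
      abel

/-- All monomials in the support of `F` have coordinate `i0` in `[-c, 0]`. -/
def Bnd {N : ℕ} (c : ℕ) (i0 : Fin N) (F : LP N) : Prop :=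
  ∀ m ∈ F.coeff.support, -(c : ℤ) ≤ m i0 ∧ m i0 ≤ 0

variable {N : ℕ} {i0 : Fin N}

lemma Bnd_single {c : ℕ} {u : Fin N →₀ ℤ} {r : K} (h1 : -(c : ℤ) ≤ u i0) (h2 : u i0 ≤ 0) :
    Bnd c i0 (AddMonoidAlgebra.single u r : LP N) := by
  intro m hm
  rw [AddMonoidAlgebra.coeff_single] at hm
  have := Finsupp.support_single_subset hm
  simp only [Finset.mem_singleton] at this
  subst this
  exact ⟨h1, h2⟩

lemma Bnd_one {c : ℕ} : Bnd c i0 (1 : LP N) :=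
  Bnd_single (by simp) (by simp)

lemma Bnd_mul {c d : ℕ} {F G : LP N} (hF : Bnd c i0 F) (hG : Bnd d i0 G) :
    Bnd (c + d) i0 (F * G) := by
  classical
  intro m hm
  have hm' := AddMonoidAlgebra.support_coeff_mul_subset F G hm
  simp only [Finset.mem_add] at hm'
  obtain ⟨u, hu, v, hv, rfl⟩ := hm'
  have h1 := hF u hu
  have h2 := hG v hv
  rw [Finsupp.add_apply]
  push_cast
  omega

lemma Bnd_sub {c : ℕ} {F G : LP N} (hF : Bnd c i0 F) (hG : Bnd c i0 G) :
    Bnd c i0 (F - G) := by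
  classical
  intro m hm
  have hm' := Finsupp.support_sub (f := F.coeff) (g := G.coeff) hm
  rw [Finset.mem_union] at hm'
  rcases hm' with h | h
  · exact hF m h
  · exact hG m h

lemma Bnd_Cq_mul {c : ℕ} {r : K} {z : LP N} (hz : Bnd c i0 z) : Bnd c i0 (Cq r * z) := by
  have : Bnd (0 + c) i0 (Cq r * z) := Bnd_mul (Bnd_single (by simp) (by simp)) hz
  simpa using this

lemma Bnd_poch {c : ℕ} {z : LP N} (hz : Bnd c i0 z) (k : ℕ) :
    Bnd (k * c) i0 (poch z k) := by
  induction k with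
  | zero => simpa [poch] using (Bnd_one : Bnd 0 i0 (1 : LP N))
  | succ k ih =>
      rw [poch, Finset.prod_range_succ, ← poch]
      have h2 : Bnd c i0 ((1 : LP N) - Cq (q ^ k) * z) :=
        Bnd_sub Bnd_one (Bnd_Cq_mul hz)
      have := Bnd_mul ih h2
      simpa [Nat.succ_mul] using this

lemma Bnd_prod {ι : Type*} {s : Finset ι} {c : ι → ℕ} {F : ι → LP N}
    (h : ∀ i ∈ s, Bnd (c i) i0 (F i)) :
    Bnd (∑ i ∈ s, c i) i0 (∏ i ∈ s, F i) := by
  classical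
  induction s using Finset.cons_induction with
  | empty => simpa using (Bnd_one : Bnd 0 i0 (1 : LP N))
  | cons a s ha ih =>
      rw [Finset.prod_cons, Finset.sum_cons]
      exact Bnd_mul (h a (Finset.mem_cons_self a s)) (ih fun i hi => h i (Finset.mem_cons_of_mem hi))

lemma Bnd_apply_eq_zero {c : ℕ} {F : LP N} (hF : Bnd c i0 F) {m : Fin N →₀ ℤ}
    (h : m i0 < -(c : ℤ) ∨ 0 < m i0) : F.coeff m = 0 := by
  by_contra h0
  have hm : m ∈ F.coeff.support := Finsupp.mem_support_iff.2 h0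
  have := hF m hm
  omega

def bfun (n : ℕ) (a : Fin n → ℕ) : Fin (n + 1) → ℕ :=
  fun i => if h : i = 0 then 0 else a (i.pred h)

lemma bfun_succ (n : ℕ) (a : Fin n → ℕ) (j : Fin n) : bfun n a j.succ = a j := by
  rw [bfun, dif_neg (Fin.succ_ne_zero j), Fin.pred_succ]

lemma Dn_split (n : ℕ) (a : Fin n → ℕ) (a₀ : ℕ) :
    Dn (Fin.cases (motive := fun _ => ℕ) a₀ a) =
      (∏ j : Fin n, poch (Xp (0 : Fin (n+1)) * Xi j.succ) a₀) *
      ((∏ j : Fin n, poch (Cq q * Xp (j.succ : Fin (n+1)) * Xi 0) (a j - 1)) *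
       ∏ p ∈ Finset.univ.filter (fun p : Fin (n+1) × Fin (n+1) => 0 < p.1 ∧ p.1 < p.2),
         (poch (Xp p.1 * Xi p.2) (bfun n a p.1) *
          poch (Cq q * Xp p.2 * Xi p.1) (bfun n a p.2 - 1))) := by
  classical
  set a' : Fin (n+1) → ℕ := Fin.cases (motive := fun _ => ℕ) a₀ a with ha'
  rw [Dn, ← Finset.prod_filter_mul_prod_filter_not
    (Finset.univ.filter (fun p : Fin (n+1) × Fin (n+1) => p.1 < p.2))
    (fun p => p.1 = 0)]
  have hset : (Finset.univ.filter (fun p : Fin (n+1) × Fin (n+1) => p.1 < p.2)).filter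
      (fun p => p.1 = 0) =
      (Finset.univ : Finset (Fin n)).image (fun j => ((0 : Fin (n+1)), j.succ)) := by
    ext p
    simp only [Finset.mem_filter, Finset.mem_univ, true_and, Finset.mem_image]
    constructor
    · rintro ⟨h1, h2⟩
      obtain ⟨x, y⟩ := p
      simp only at h1 h2
      subst h2
      obtain ⟨j, rfl⟩ := Fin.eq_succ_of_ne_zero (Fin.pos_iff_ne_zero.mp h1)
      exact ⟨j, rfl⟩
    · rintro ⟨j, rfl⟩
      exact ⟨Fin.succ_pos j, rfl⟩
  have hinj : Set.InjOn (fun j : Fin n => ((0 : Fin (n+1)), j.succ))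
      (Finset.univ : Finset (Fin n)) := by
    intro x _ y _ h
    simpa [Prod.ext_iff] using h
  rw [hset, Finset.prod_image (fun x hx y hy h => hinj hx hy h)]
  have h1 : ∀ j : Fin n,
      poch (Xp (0 : Fin (n+1)) * Xi j.succ) (a' 0) *
        poch (Cq q * Xp (j.succ : Fin (n+1)) * Xi 0) (a' j.succ - 1) =
      poch (Xp (0 : Fin (n+1)) * Xi j.succ) a₀ *
        poch (Cq q * Xp (j.succ : Fin (n+1)) * Xi 0) (a j - 1) := by
    intro j
    rw [ha']
    simp
  simp only [h1]
  rw [Finset.prod_mul_distrib, mul_assoc]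
  congr 1
  congr 1
  have hset2 : (Finset.univ.filter (fun p : Fin (n+1) × Fin (n+1) => p.1 < p.2)).filter
      (fun p => ¬ p.1 = 0) =
      Finset.univ.filter (fun p : Fin (n+1) × Fin (n+1) => 0 < p.1 ∧ p.1 < p.2) := by
    ext p
    simp only [Finset.mem_filter, Finset.mem_univ, true_and]
    rw [Fin.pos_iff_ne_zero]
    tauto
  rw [hset2]
  refine Finset.prod_congr rfl fun p hp => ?_
  simp only [Finset.mem_filter] at hp
  obtain ⟨_, hp1, hp2⟩ := hp
  have hne1 : p.1 ≠ 0 := Fin.pos_iff_ne_zero.mp hp1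
  have hne2 : p.2 ≠ 0 := Fin.pos_iff_ne_zero.mp (lt_trans hp1 hp2)
  obtain ⟨i, hi⟩ := Fin.eq_succ_of_ne_zero hne1
  obtain ⟨j, hj⟩ := Fin.eq_succ_of_ne_zero hne2
  rw [hi, hj, ha']
  simp [bfun_succ]

end Stmt6Aux

open Stmt6Aux Polynomial in
theorem stmt6 (n : ℕ) (hn : 1 ≤ n) (a : Fin n → ℕ) (ha : ∀ i, 1 ≤ a i)
    (k : ℤ) (hk : k ≤ (∑ i, a i : ℤ))
    (L : LP (n + 1)) (hL : ∀ m : Fin (n + 1) →₀ ℤ, m 0 ≠ 0 → coeff L m = 0) :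
    ∃ P : Polynomial K,
      (∀ d ∈ P.support, (d : ℤ) ≤ (∑ i, a i : ℤ) - k - n) ∧
      ∀ a₀ : ℕ,
        CT ((AddMonoidAlgebra.single (Finsupp.single (0 : Fin (n + 1)) k) 1 : LP (n + 1)) *
            L * Dn (Fin.cases (motive := fun _ => ℕ) a₀ a)) = P.eval (q ^ a₀) := by
  classical
  -- monomial exponents
  set e : Fin n → (Fin (n+1) →₀ ℤ) :=
    fun j => Finsupp.single 0 1 + Finsupp.single j.succ (-1) with he
  have hXpXi : ∀ j : Fin n,
      Xp (0 : Fin (n+1)) * Xi j.succ = AddMonoidAlgebra.single (e j) 1 := by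
    intro j
    rw [Xp, Xi, AddMonoidAlgebra.single_mul_single, one_mul, he]
  have he0 : ∀ j : Fin n, e j 0 = 1 := by
    intro j
    rw [he]
    simp [Finsupp.single_apply, Fin.succ_ne_zero j]
  -- the a₀-independent part
  set D1 : LP (n+1) :=
    ∏ p ∈ Finset.univ.filter (fun p : Fin (n+1) × Fin (n+1) => 0 < p.1 ∧ p.1 < p.2),
      (poch (Xp p.1 * Xi p.2) (bfun n a p.1) *
       poch (Cq q * Xp p.2 * Xi p.1) (bfun n a p.2 - 1)) with hD1
  set Psi : LP (n+1) :=
    ∏ j : Fin n, poch (Cq q * Xp (j.succ : Fin (n+1)) * Xi 0) (a j - 1) with hPsi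
  set R : LP (n+1) := L * (Psi * D1) with hR
  -- support bound for R
  have hBndL : Bnd 0 (0 : Fin (n+1)) L := by
    intro m hm
    have hm0 : m 0 = 0 := by
      by_contra h
      exact (Finsupp.mem_support_iff.1 hm) (hL m h)
    omega
  have hBndPsi : Bnd (∑ j, (a j - 1)) (0 : Fin (n+1)) Psi := by
    refine Bnd_prod fun j _ => ?_
    have hz : Cq q * Xp (j.succ : Fin (n+1)) * Xi 0 =
        AddMonoidAlgebra.single
          (Finsupp.single (j.succ : Fin (n+1)) 1 + Finsupp.single 0 (-1)) q := by
      rw [Cq, Xp, Xi, AddMonoidAlgebra.single_mul_single, AddMonoidAlgebra.single_mul_single,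
        zero_add, mul_one, mul_one]
    have hz0 : ((Finsupp.single (j.succ : Fin (n+1)) 1 + Finsupp.single 0 (-1) :
        Fin (n+1) →₀ ℤ)) 0 = -1 := by
      simp [Finsupp.single_apply, Fin.succ_ne_zero j]
    have hb : Bnd 1 (0 : Fin (n+1)) (Cq q * Xp (j.succ : Fin (n+1)) * Xi 0) := by
      rw [hz]
      exact Bnd_single (by rw [hz0]; norm_num) (by rw [hz0]; norm_num)
    have := Bnd_poch hb (a j - 1)
    simpa using this
  have hBndD1 : Bnd 0 (0 : Fin (n+1)) D1 := by
    rw [hD1]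
    have := Bnd_prod (i0 := (0 : Fin (n+1)))
      (s := Finset.univ.filter (fun p : Fin (n+1) × Fin (n+1) => 0 < p.1 ∧ p.1 < p.2))
      (c := fun _ => 0)
      (F := fun p => poch (Xp p.1 * Xi p.2) (bfun n a p.1) *
        poch (Cq q * Xp p.2 * Xi p.1) (bfun n a p.2 - 1)) ?_
    · simpa using this
    · intro p hp
      simp only [Finset.mem_filter, Finset.mem_univ, true_and] at hp
      have hne1 : p.1 ≠ 0 := Fin.pos_iff_ne_zero.mp hp.1
      have hne2 : p.2 ≠ 0 := Fin.pos_iff_ne_zero.mp (lt_trans hp.1 hp.2)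
      have hz1 : Xp p.1 * Xi p.2 =
          AddMonoidAlgebra.single (Finsupp.single p.1 1 + Finsupp.single p.2 (-1)) 1 := by
        rw [Xp, Xi, AddMonoidAlgebra.single_mul_single, one_mul]
      have hz2 : Cq q * Xp p.2 * Xi p.1 =
          AddMonoidAlgebra.single (Finsupp.single p.2 1 + Finsupp.single p.1 (-1)) q := by
        rw [Cq, Xp, Xi, AddMonoidAlgebra.single_mul_single, AddMonoidAlgebra.single_mul_single,
          zero_add, mul_one, mul_one]
      have hv1 : ((Finsupp.single p.1 1 + Finsupp.single p.2 (-1) :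
          Fin (n+1) →₀ ℤ)) 0 = 0 := by
        simp [Finsupp.single_apply, hne1, hne2]
      have hv2 : ((Finsupp.single p.2 1 + Finsupp.single p.1 (-1) :
          Fin (n+1) →₀ ℤ)) 0 = 0 := by
        simp [Finsupp.single_apply, hne1, hne2]
      have hs1 : Bnd 0 (0 : Fin (n+1)) (Xp p.1 * Xi p.2) := by
        rw [hz1]
        refine Bnd_single ?_ ?_ <;> rw [hv1] <;> norm_num
      have hs2 : Bnd 0 (0 : Fin (n+1)) (Cq q * Xp p.2 * Xi p.1) := by
        rw [hz2]
        refine Bnd_single ?_ ?_ <;> rw [hv2] <;> norm_num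
      have hb1 : Bnd 0 (0 : Fin (n+1)) (poch (Xp p.1 * Xi p.2) (bfun n a p.1)) := by
        simpa using Bnd_poch hs1 (bfun n a p.1)
      have hb2 : Bnd 0 (0 : Fin (n+1)) (poch (Cq q * Xp p.2 * Xi p.1) (bfun n a p.2 - 1)) := by
        simpa using Bnd_poch hs2 (bfun n a p.2 - 1)
      simpa using Bnd_mul hb1 hb2
  have hBndR : Bnd (∑ j, (a j - 1)) (0 : Fin (n+1)) R := by
    rw [hR]
    have := Bnd_mul hBndL (Bnd_mul hBndPsi hBndD1)
    simpa using this
  -- cast of the bound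
  have hCcast : ((∑ j, (a j - 1) : ℕ) : ℤ) = (∑ i, a i : ℤ) - n := by
    rw [Nat.cast_sum]
    have hterm : ∀ j ∈ Finset.univ, ((a j - 1 : ℕ) : ℤ) = (a j : ℤ) - 1 := fun j _ => by
      rw [Nat.cast_sub (ha j)]; norm_num
    rw [Finset.sum_congr rfl hterm, Finset.sum_sub_distrib]
    simp
  -- the coefficients
  set u₀ : Fin (n+1) →₀ ℤ := Finsupp.single (0 : Fin (n+1)) k with hu₀
  set w : (Fin n → ℕ) → (Fin (n+1) →₀ ℤ) := fun m => ∑ j, (m j) • e j with hw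
  set ρ : (Fin n → ℕ) → K := fun m => R.coeff (-(u₀ + w m)) with hρ
  have hcoord : ∀ m : Fin n → ℕ, (-(u₀ + w m)) 0 = -(k + ∑ j, (m j : ℤ)) := by
    intro m
    have hsum : (w m) 0 = ∑ j, (m j : ℤ) := by
      rw [show w m = ∑ j, (m j) • e j from rfl, Finsupp.finset_sum_apply]
      refine Finset.sum_congr rfl fun j _ => ?_
      simp [he0 j]
    have hu : u₀ 0 = k := by rw [hu₀]; exact Finsupp.single_eq_same
    rw [Finsupp.neg_apply, Finsupp.add_apply, hsum, hu]
  -- vanishing of ρ beyond the bound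
  have hρzero : ∀ m : Fin n → ℕ,
      ((∑ i, a i : ℤ) - n - k < ∑ j, (m j : ℤ)) → ρ m = 0 := by
    intro m hm
    rw [hρ]
    refine Bnd_apply_eq_zero hBndR (Or.inl ?_)
    rw [hcoord m, hCcast]
    omega
  -- main constant-term computation
  have hCT : ∀ a₀ : ℕ,
      CT ((AddMonoidAlgebra.single u₀ 1 : LP (n+1)) *
          L * Dn (Fin.cases (motive := fun _ => ℕ) a₀ a)) =
      ∑ m ∈ Fintype.piFinset (fun _ : Fin n => Finset.range (a₀ + 1)),
        (∏ j, (Pm (m j)).eval (q ^ a₀)) * ρ m := by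
    intro a₀
    rw [Dn_split n a a₀, ← hD1, ← hPsi]
    have hrearr : (AddMonoidAlgebra.single u₀ 1 : LP (n+1)) * L *
        ((∏ j : Fin n, poch (Xp (0 : Fin (n+1)) * Xi j.succ) a₀) * (Psi * D1)) =
        (AddMonoidAlgebra.single u₀ 1 : LP (n+1)) *
          (∏ j : Fin n, poch (Xp (0 : Fin (n+1)) * Xi j.succ) a₀) * R := by
      rw [hR]; ring
    rw [hrearr]
    have hPhi : (∏ j : Fin n, poch (Xp (0 : Fin (n+1)) * Xi j.succ) a₀) =
        ∑ m ∈ Fintype.piFinset (fun _ : Fin n => Finset.range (a₀ + 1)),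
          AddMonoidAlgebra.single (w m) (∏ j, (Pm (m j)).eval (q ^ a₀)) := by
      calc (∏ j : Fin n, poch (Xp (0 : Fin (n+1)) * Xi j.succ) a₀)
          = ∏ j : Fin n, ∑ mj ∈ Finset.range (a₀ + 1),
              AddMonoidAlgebra.single (mj • e j) ((Pm mj).eval (q ^ a₀)) := by
            refine Finset.prod_congr rfl fun j _ => ?_
            rw [hXpXi j, poch_single_expand]
        _ = ∑ m ∈ Fintype.piFinset (fun _ : Fin n => Finset.range (a₀ + 1)),
              ∏ j : Fin n, AddMonoidAlgebra.single ((m j) • e j) ((Pm (m j)).eval (q ^ a₀)) :=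
            Finset.prod_univ_sum _ _
        _ = _ := by
            refine Finset.sum_congr rfl fun m _ => ?_
            rw [AddMonoidAlgebra.prod_single, hw]
    rw [hPhi, Finset.mul_sum, Finset.sum_mul]
    simp only [CT, _root_.coeff]
    rw [AddMonoidAlgebra.coeff_sum, Finset.sum_apply']
    refine Finset.sum_congr rfl fun m _ => ?_
    rw [AddMonoidAlgebra.single_mul_single, one_mul]
    rw [AddMonoidAlgebra.coeff_single_mul_apply, add_zero, hρ]
  -- conclusion
  set B' : ℕ := ((∑ i, a i : ℤ) - k - n).toNat with hB'
  set P : Polynomial K :=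
    ∑ m ∈ Fintype.piFinset (fun _ : Fin n => Finset.range (B' + 1)),
      Polynomial.C (ρ m) * ∏ j, Pm (m j) with hP
  have hBcast : (∑ i, a i : ℤ) - k - n ≤ (B' : ℤ) := by
    rw [hB']
    exact Int.self_le_toNat _
  refine ⟨P, ?_, ?_⟩
  · -- degree bound
    intro d hd
    rw [hP] at hd
    have hcoeff : (∑ m ∈ Fintype.piFinset (fun _ : Fin n => Finset.range (B' + 1)),
        Polynomial.C (ρ m) * ∏ j, Pm (m j)).coeff d ≠ 0 := Polynomial.mem_support_iff.1 hd
    rw [Polynomial.finset_sum_coeff] at hcoeff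
    obtain ⟨m, hm, hdm⟩ := Finset.exists_ne_zero_of_sum_ne_zero hcoeff
    have hρne : ρ m ≠ 0 := by
      intro h0
      rw [h0, map_zero, zero_mul, Polynomial.coeff_zero] at hdm
      exact hdm rfl
    have hdm' : d ∈ (Polynomial.C (ρ m) * ∏ j, Pm (m j)).support :=
      Polynomial.mem_support_iff.2 hdm
    have hsum_le : (∑ j, (m j : ℤ)) ≤ (∑ i, a i : ℤ) - n - k := by
      by_contra h
      push_neg at h
      exact hρne (hρzero m h)
    have hd1 : d ≤ (Polynomial.C (ρ m) * ∏ j, Pm (m j)).natDegree :=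
      Polynomial.le_natDegree_of_mem_supp d hdm'
    have hd2 : (Polynomial.C (ρ m) * ∏ j, Pm (m j)).natDegree ≤ ∑ j, m j := by
      refine le_trans (Polynomial.natDegree_C_mul_le _ _) ?_
      refine le_trans (Polynomial.natDegree_prod_le _ _) ?_
      exact Finset.sum_le_sum fun j _ => Pm_natDegree_le (m j)
    have hd3 : (d : ℤ) ≤ ∑ j, (m j : ℤ) := by
      rw [← Nat.cast_sum]
      exact_mod_cast le_trans hd1 hd2
    omega
  · -- evaluation
    intro a₀
    rw [hCT a₀, hP, Polynomial.eval_finset_sum]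
    set M := max a₀ B' with hM
    have hsub1 : Fintype.piFinset (fun _ : Fin n => Finset.range (a₀ + 1)) ⊆
        Fintype.piFinset (fun _ : Fin n => Finset.range (M + 1)) :=
      Fintype.piFinset_subset _ _ fun _ => Finset.range_subset_range.2 (by omega)
    have hsub2 : Fintype.piFinset (fun _ : Fin n => Finset.range (B' + 1)) ⊆
        Fintype.piFinset (fun _ : Fin n => Finset.range (M + 1)) :=
      Fintype.piFinset_subset _ _ fun _ => Finset.range_subset_range.2 (by omega)
    rw [Finset.sum_subset hsub1 ?_, Finset.sum_subset hsub2 ?_]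
    · refine Finset.sum_congr rfl fun m _ => ?_
      rw [Polynomial.eval_mul, Polynomial.eval_C, Polynomial.eval_prod, mul_comm]
    · -- extra terms on the P side vanish
      intro m hmM hm
      rw [Fintype.mem_piFinset] at hm
      push_neg at hm
      obtain ⟨j, hj⟩ := hm
      rw [Finset.mem_range] at hj
      push_neg at hj
      have hjZ : (B' : ℤ) < (m j : ℤ) := by exact_mod_cast hj
      have hmono : (m j : ℤ) ≤ ∑ i, (m i : ℤ) :=
        Finset.single_le_sum (f := fun i => (m i : ℤ)) (fun i _ => by positivity)
          (Finset.mem_univ j)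
      have : ρ m = 0 := hρzero m (by omega)
      rw [this, map_zero, zero_mul, Polynomial.eval_zero]
    · -- extra terms on the CT side vanish
      intro m hmM hm
      rw [Fintype.mem_piFinset] at hm
      push_neg at hm
      obtain ⟨j, hj⟩ := hm
      rw [Finset.mem_range] at hj
      push_neg at hj
      have : (∏ i, (Pm (m i)).eval (q ^ a₀)) = 0 :=
        Finset.prod_eq_zero (Finset.mem_univ j) (Pm_eval_q_pow_eq_zero hj)
      rw [this, zero_mul]
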